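/- Let p be a prime and j ≥ 2 an integer with p ≤ j. Then ∫_{-1/2}^{1/2} |1 - e(θ)/p|^{-2j} dθ ≥ (c·p/j)·(1 - 1/p)^{-2j} for some absolute positive constant c, where e(θ) = exp(2πiθ). -/

import Mathlib

open Real Complex

lemma norm_exp_mul_I_sub_one_le (x : ℝ) : ‖Complex.exp (x * Complex.I) - 1‖ ≤ |x| := by
  have h : Complex.normSq (Complex.exp (x * Complex.I) - 1) = 2 - 2 * Real.cos x := by
    rw [Complex.exp_mul_I]
    simp [Complex.normSq_apply, Complex.cos_ofReal_re, Complex.sin_ofReal_re]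
    nlinarith [Real.sin_sq_add_cos_sq x]
  have h2 : 2 - 2 * Real.cos x ≤ x ^ 2 := by
    nlinarith [Real.one_sub_sq_div_two_le_cos (x := x)]
  calc ‖Complex.exp (x * Complex.I) - 1‖
      = Real.sqrt (Complex.normSq (Complex.exp (x * Complex.I) - 1)) := by
        rw [Complex.norm_def]
    _ ≤ Real.sqrt (x ^ 2) := by rw [h]; exact Real.sqrt_le_sqrt h2
    _ = |x| := Real.sqrt_sq_eq_abs x

theorem integral_lower_bound :
    ∃ c : ℝ, 0 < c ∧ ∀ (p j : ℕ), p.Prime → 2 ≤ j → p ≤ j →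
      (∫ θ in (-(1:ℝ)/2)..(1/2),
          (‖1 - Complex.exp (2 * Real.pi * Complex.I * θ) / p‖ ^ (2 * j))⁻¹)
        ≥ (c * p / j) * (((1 - 1 / (p : ℝ)) ^ (2 * j))⁻¹) := by
  refine ⟨Real.exp (-(4 * Real.pi)), Real.exp_pos _, ?_⟩
  intro p j hp hj hpj
  have hP2 : (2:ℝ) ≤ p := by exact_mod_cast hp.two_le
  have hP0 : (0:ℝ) < p := by linarith
  have hJ2 : (2:ℝ) ≤ j := by exact_mod_cast hj
  have hJ0 : (0:ℝ) < j := by linarith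
  have hPJ : (p:ℝ) ≤ j := by exact_mod_cast hpj
  have hpi : (0:ℝ) < Real.pi := Real.pi_pos
  set f : ℝ → ℝ :=
    fun θ => (‖1 - Complex.exp (2 * Real.pi * Complex.I * θ) / p‖ ^ (2 * j))⁻¹ with hf_def
  set a : ℝ := p / (2 * j) with ha_def
  have ha0 : 0 < a := by positivity
  have hahalf : a ≤ 1 / 2 := by
    rw [ha_def, div_le_iff₀ (by linarith)]; linarith
  have hkey : ∀ θ : ℝ, (2 * (Real.pi : ℂ) * Complex.I * θ) = ((2 * Real.pi * θ : ℝ) : ℂ) * Complex.I := by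
    intro θ; push_cast; ring
  have hpos : (0:ℝ) < 1 - 1 / p := by
    have : 1 / (p:ℝ) ≤ 1 / 2 := by
      apply one_div_le_one_div_of_le <;> linarith
    linarith
  have hnorm_lb : ∀ θ : ℝ, 1 - 1 / (p:ℝ) ≤ ‖1 - Complex.exp (2 * Real.pi * Complex.I * θ) / p‖ := by
    intro θ
    have h1 : ‖Complex.exp (2 * (Real.pi:ℂ) * Complex.I * θ) / (p:ℂ)‖ = 1 / p := by
      rw [norm_div, hkey θ]
      rw [Complex.norm_exp_ofReal_mul_I]
      simp
    calc 1 - 1 / (p:ℝ) = ‖(1:ℂ)‖ - ‖Complex.exp (2 * (Real.pi:ℂ) * Complex.I * θ) / (p:ℂ)‖ := by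
          rw [h1]; simp
      _ ≤ ‖1 - Complex.exp (2 * Real.pi * Complex.I * θ) / p‖ := norm_sub_norm_le _ _
  have hne : ∀ θ : ℝ, ‖1 - Complex.exp (2 * Real.pi * Complex.I * θ) / p‖ ^ (2 * j) ≠ 0 := by
    intro θ
    exact pow_ne_zero _ (ne_of_gt (lt_of_lt_of_le hpos (hnorm_lb θ)))
  have hcont : Continuous f := by
    apply Continuous.inv₀
    · apply Continuous.pow
      apply Continuous.norm
      fun_prop
    · exact hne
  have hfnonneg : ∀ θ : ℝ, 0 ≤ f θ := fun θ => inv_nonneg.mpr (by positivity)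
  -- pointwise lower bound on [-a, a]
  set C : ℝ := Real.exp (-(4 * Real.pi)) * (((1 - 1 / (p:ℝ)) ^ (2 * j))⁻¹) with hC_def
  have hpt : ∀ θ ∈ Set.Icc (-a) a, C ≤ f θ := by
    intro θ hθ
    have habs : |θ| ≤ a := abs_le.mpr ⟨hθ.1, hθ.2⟩
    have hub : ‖1 - Complex.exp (2 * Real.pi * Complex.I * θ) / p‖
        ≤ (1 - 1 / p) * Real.exp (2 * Real.pi / j) := by
      have hsplit : (1:ℂ) - Complex.exp (2 * Real.pi * Complex.I * θ) / p
          = ((1 - 1 / (p:ℝ)) : ℝ) + (1 - Complex.exp (2 * Real.pi * Complex.I * θ)) / p := by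
        push_cast; ring
      have h1e : ‖(1:ℂ) - Complex.exp (2 * Real.pi * Complex.I * θ)‖ ≤ 2 * Real.pi * |θ| := by
        rw [hkey θ]
        have := norm_exp_mul_I_sub_one_le (2 * Real.pi * θ)
        calc ‖(1:ℂ) - Complex.exp (((2 * Real.pi * θ : ℝ):ℂ) * Complex.I)‖
            = ‖Complex.exp (((2 * Real.pi * θ : ℝ):ℂ) * Complex.I) - 1‖ := by
              rw [norm_sub_rev]
          _ ≤ |2 * Real.pi * θ| := this
          _ = 2 * Real.pi * |θ| := by
              rw [abs_mul, _root_.abs_of_nonneg (by positivity : (0:ℝ) ≤ 2 * Real.pi)]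
      calc ‖1 - Complex.exp (2 * Real.pi * Complex.I * θ) / (p:ℂ)‖
          ≤ ‖(((1 - 1 / (p:ℝ)) : ℝ) : ℂ)‖
            + ‖(1 - Complex.exp (2 * Real.pi * Complex.I * θ)) / (p:ℂ)‖ := by
            rw [hsplit]; exact norm_add_le _ _
        _ ≤ (1 - 1 / p) + 2 * Real.pi * |θ| / p := by
            rw [Complex.norm_real, Real.norm_eq_abs, abs_of_pos hpos, norm_div]
            have : ‖((p:ℕ):ℂ)‖ = (p:ℝ) := by simp
            rw [this]
            gcongr
        _ ≤ (1 - 1 / p) * (1 + 2 * Real.pi / j) := by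
            have h2 : 2 * Real.pi * |θ| / p ≤ (1 - 1 / p) * (2 * Real.pi / j) := by
              have hpa : |θ| / p ≤ 1 / (2 * j) := by
                rw [div_le_div_iff₀ hP0 (by linarith)]
                calc |θ| * (2 * j) ≤ a * (2 * j) := by
                      apply mul_le_mul_of_nonneg_right habs (by linarith)
                  _ = 1 * p := by rw [ha_def]; field_simp
              have hhalf : (1:ℝ)/2 ≤ 1 - 1/p := by
                have : 1 / (p:ℝ) ≤ 1 / 2 := by
                  apply one_div_le_one_div_of_le <;> linarith
                linarith
              calc 2 * Real.pi * |θ| / p = 2 * Real.pi * (|θ| / p) := by ring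
                _ ≤ 2 * Real.pi * (1 / (2 * j)) := by
                    apply mul_le_mul_of_nonneg_left hpa (by positivity)
                _ = (1/2) * (2 * Real.pi / j) := by field_simp
                _ ≤ (1 - 1/p) * (2 * Real.pi / j) := by
                    apply mul_le_mul_of_nonneg_right hhalf (by positivity)
            nlinarith
        _ ≤ (1 - 1 / p) * Real.exp (2 * Real.pi / j) := by
            have := Real.add_one_le_exp (2 * Real.pi / j)
            nlinarith
    have hpow : ‖1 - Complex.exp (2 * Real.pi * Complex.I * θ) / p‖ ^ (2 * j)
        ≤ (1 - 1 / (p:ℝ)) ^ (2 * j) * Real.exp (4 * Real.pi) := by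
      calc ‖1 - Complex.exp (2 * Real.pi * Complex.I * θ) / p‖ ^ (2 * j)
          ≤ ((1 - 1 / p) * Real.exp (2 * Real.pi / j)) ^ (2 * j) := by
            apply pow_le_pow_left₀ (norm_nonneg _) hub
        _ = (1 - 1 / (p:ℝ)) ^ (2 * j) * Real.exp (2 * Real.pi / j) ^ (2 * j) := by
            rw [mul_pow]
        _ = (1 - 1 / (p:ℝ)) ^ (2 * j) * Real.exp (4 * Real.pi) := by
            rw [← Real.exp_nat_mul]
            congr 1
            push_cast
            field_simp
            ring
    rw [hf_def, hC_def]
    rw [Real.exp_neg]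
    rw [← mul_inv]
    apply inv_anti₀
    · exact pow_pos (lt_of_lt_of_le hpos (hnorm_lb θ)) _
    · calc ‖1 - Complex.exp (2 * Real.pi * Complex.I * θ) / (p:ℂ)‖ ^ (2 * j)
          ≤ (1 - 1 / (p:ℝ)) ^ (2 * j) * Real.exp (4 * Real.pi) := hpow
        _ = Real.exp (4 * Real.pi) * (1 - 1 / (p:ℝ)) ^ (2 * j) := by ring
  -- now the integral estimates
  have hI1 : IntervalIntegrable f MeasureTheory.volume (-(1:ℝ)/2) (1/2) :=
    hcont.intervalIntegrable _ _
  have hI2 : IntervalIntegrable f MeasureTheory.volume (-a) a :=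
    hcont.intervalIntegrable _ _
  have hmono : (∫ θ in (-a)..a, f θ) ≤ ∫ θ in (-(1:ℝ)/2)..(1/2), f θ := by
    apply intervalIntegral.integral_mono_interval (by linarith) (by linarith) (by linarith)
    · filter_upwards with θ using hfnonneg θ
    · exact hI1
  have hconst : ((p:ℝ) / j) * C ≤ ∫ θ in (-a)..a, f θ := by
    have := intervalIntegral.integral_mono_on (by linarith : -a ≤ a)
      (intervalIntegrable_const (c := C)) hI2 hpt
    rw [intervalIntegral.integral_const] at this
    have h2a : (a - (-a)) • C = ((p:ℝ) / j) * C := by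
      rw [smul_eq_mul]
      congr 1
      rw [ha_def]
      field_simp
      ring
    rwa [h2a] at this
  have : (Real.exp (-(4 * Real.pi)) * p / j) * (((1 - 1 / (p : ℝ)) ^ (2 * j))⁻¹)
      = ((p:ℝ) / j) * C := by
    rw [hC_def]; ring
  rw [ge_iff_le, this]
  exact le_trans hconst hmono
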